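/- Let r, k, N be natural numbers with 0 < k < N and let {f_i}_{i=1}^{rN+k} be an equal-norm Parseval frame for an N-dimensional Hilbert space H_N. Then the index set {1, …, rN+k} can be partitioned into r+1 sets on each of which the corresponding vectors are linearly independent. -/

import Mathlib

open scoped InnerProductSpace


open Submodule Module

set_option linter.unusedSectionVars false

section RadoHorn

variable {K : Type*} [Field K] {V : Type*} [AddCommGroup V] [Module K V] [FiniteDimensional K V]
variable {ι : Type*} [Fintype ι] [DecidableEq ι]

/-- span of image of a finset -/
noncomputable def RHSp (K : Type*) [Field K] {V : Type*} [AddCommGroup V] [Module K V]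
    {ι : Type*} (v : ι → V) (s : Finset ι) : Submodule K V :=
  Submodule.span K (v '' ↑s)

/-- independence via rank -/
def RHInd (K : Type*) [Field K] {V : Type*} [AddCommGroup V] [Module K V]
    {ι : Type*} (v : ι → V) (s : Finset ι) : Prop :=
  s.card = Module.finrank K (RHSp K v s)

variable (v : ι → V)

lemma RHSp_mono {s t : Finset ι} (h : s ⊆ t) : RHSp K v s ≤ RHSp K v t :=
  span_mono (Set.image_mono (by exact_mod_cast h))

lemma mem_RHSp {s : Finset ι} {i : ι} (h : i ∈ s) : v i ∈ RHSp K v s :=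
  subset_span ⟨i, by simpa using h⟩

lemma RHfinrank_le (s : Finset ι) : Module.finrank K (RHSp K v s) ≤ s.card := by
  classical
  have : RHSp K v s = Submodule.span K ↑(s.image v) := by
    rw [Finset.coe_image]; rfl
  rw [this]
  exact (finrank_span_finset_le_card (s.image v)).trans (Finset.card_image_le)

lemma RHInd_iff (s : Finset ι) :
    RHInd K v s ↔ LinearIndependent K (fun i : (s : Set ι) => v i) := by
  rw [linearIndependent_iff_card_eq_finrank_span]
  have h1 : Fintype.card (s : Set ι) = s.card := by simp
  have h2 : Set.range (fun i : (s : Set ι) => v i) = v '' ↑s := by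
    ext x; simp
  rw [h1, h2, Set.finrank]
  rfl

lemma RHInd_empty : RHInd K v (∅ : Finset ι) := by
  rw [RHInd, RHSp, Finset.coe_empty, Set.image_empty, span_empty, finrank_bot]
  simp

lemma RHInd_mono {s t : Finset ι} (h : s ⊆ t) (ht : RHInd K v t) : RHInd K v s := by
  rw [RHInd_iff] at ht ⊢
  exact ht.comp (Set.inclusion (by exact_mod_cast h)) (Set.inclusion_injective _)

lemma RHInd_insert {s : Finset ι} {y : ι} (hs : RHInd K v s) (hy : y ∉ s)
    (hv : v y ∉ RHSp K v s) : RHInd K v (insert y s) := by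
  have hvy : v y ≠ 0 := fun h => hv (h ▸ zero_mem _)
  have hsp : RHSp K v (insert y s) = (K ∙ v y) ⊔ RHSp K v s := by
    rw [RHSp, Finset.coe_insert, Set.image_insert_eq, Submodule.span_insert]
    rfl
  have hinf : (K ∙ v y) ⊓ RHSp K v s = ⊥ := by
    rw [eq_bot_iff]
    rintro z ⟨hz1, hz2⟩
    rcases mem_span_singleton.1 hz1 with ⟨c, rfl⟩
    rcases eq_or_ne c 0 with rfl | hc
    · simp
    · have h2 := (RHSp K v s).smul_mem c⁻¹ hz2
      rw [inv_smul_smul₀ hc] at h2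
      exact absurd h2 hv
  have := Submodule.finrank_sup_add_finrank_inf_eq (K ∙ v y) (RHSp K v s)
  rw [hinf, finrank_bot, add_zero, finrank_span_singleton hvy] at this
  rw [RHInd, hsp, this, Finset.card_insert_of_notMem hy, ← hs]
  ring

/-- representation with exact support detection -/
lemma RHrep {s : Finset ι} (hs : RHInd K v s) {w : V} (hw : w ∈ RHSp K v s) :
    ∃ a : ι → K, w = ∑ z ∈ s, a z • v z ∧
      ∀ z ∈ s, (a z ≠ 0 ↔ w ∉ RHSp K v (s.erase z)) := by
  rw [RHSp, Finsupp.mem_span_image_iff_linearCombination] at hw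
  obtain ⟨l, hl, hlw⟩ := hw
  rw [Finsupp.mem_supported] at hl
  have hlsub : l.support ⊆ s := by exact_mod_cast hl
  have hLI : LinearIndependent K (v ∘ (fun i : (s : Set ι) => (i : ι))) := by
    exact (RHInd_iff v s).1 hs
  rw [linearIndependent_comp_subtype_iff, linearIndepOn_iff] at hLI
  refine ⟨l, ?_, ?_⟩
  · rw [← hlw, Finsupp.linearCombination_apply, Finsupp.sum]
    refine Finset.sum_subset hlsub ?_
    intro z _ hz
    simp [Finsupp.notMem_support_iff.1 hz]
  · intro z hz
    constructor
    · intro hne hmem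
      rw [RHSp, Finsupp.mem_span_image_iff_linearCombination] at hmem
      obtain ⟨l', hl', hl'w⟩ := hmem
      rw [Finsupp.mem_supported] at hl'
      have hl'sub : l'.support ⊆ s.erase z := by exact_mod_cast hl'
      have hdiff : l - l' = 0 := by
        refine hLI _ ?_ ?_
        · rw [Finsupp.mem_supported]
          refine Finset.coe_subset.2 (Finsupp.support_sub.trans (Finset.union_subset hlsub
            (hl'sub.trans (Finset.erase_subset _ _))))
        · rw [map_sub, hlw, hl'w, sub_self]
      have hz' : l' z = 0 := by
        by_contra h
        exact (Finset.notMem_erase z s) (hl'sub (Finsupp.mem_support_iff.2 h))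
      have hlz : l z - l' z = 0 := by
        have := congrFun (congrArg (fun f : ι →₀ K => (f : ι → K)) hdiff) z
        simpa using this
      exact hne (by rw [sub_eq_zero] at hlz; rw [hlz, hz'])
    · intro hmem h
      apply hmem
      have hw2 : w = ∑ z' ∈ s.erase z, l z' • v z' := by
        rw [← hlw, Finsupp.linearCombination_apply, Finsupp.sum]
        refine Finset.sum_subset ?_ ?_
        · refine Finset.subset_erase.2 ⟨hlsub, ?_⟩
          simp [Finsupp.notMem_support_iff, h]
        · intro z' _ hz'
          simp [Finsupp.notMem_support_iff.1 hz']
      rw [hw2]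
      exact sum_mem fun z' hz' => smul_mem _ _ (mem_RHSp v hz')

end RadoHorn

section Aug

variable {K : Type*} [Field K] {V : Type*} [AddCommGroup V] [Module K V] [FiniteDimensional K V]
variable {ι : Type*} [Fintype ι] [DecidableEq ι] (v : ι → V) {m : ℕ}

lemma RHaug (T : Finset ι) (x : ι) (hx : x ∉ T) (c : ι → Fin m)
    (hc : ∀ j, RHInd K v (T.filter (fun i => c i = j)))
    (hcond : ∀ S : Finset ι, S ⊆ insert x T →
      S.card ≤ m * Module.finrank K (RHSp K v S)) :
    ∃ c' : ι → Fin m, ∀ j, RHInd K v ((insert x T).filter (fun i => c' i = j)) := by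
  classical
  set fib : Fin m → Finset ι := fun j => T.filter (fun i => c i = j) with hfib
  set Good : ι → Prop := fun y => ∃ j, v y ∉ RHSp K v (fib j) with hGood
  set Arc : ι → ι → Prop := fun y z => z ∈ T ∧ v y ∉ RHSp K v ((fib (c z)).erase z) with hArc
  by_cases hQ : ∃ n, ∃ p : ℕ → ι, p 0 = x ∧ (∀ i < n, Arc (p i) (p (i+1))) ∧ Good (p n)
  · -- augmenting path exists; take a shortest one and exchange along it
    set n₀ := Nat.find hQ with hn₀
    obtain ⟨p, hp0, harc, hgood⟩ := Nat.find_spec hQ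
    have hmin : ∀ n' < n₀, ¬ ∃ p' : ℕ → ι, p' 0 = x ∧ (∀ i < n', Arc (p' i) (p' (i+1))) ∧
        Good (p' n') := fun n' h => Nat.find_min hQ h
    have hng : ∀ i, i < n₀ → ¬ Good (p i) := by
      intro i hi hg
      exact hmin i hi ⟨p, hp0, fun t ht => harc t (by omega), hg⟩
    have noshort : ∀ i j, i + 1 < j → j ≤ n₀ → ¬ Arc (p i) (p j) := by
      intro i j hij hj hA
      refine hmin (n₀ - (j - i - 1)) (by omega)
        ⟨fun t => if t ≤ i then p t else p (t + (j - i - 1)), by simp [hp0], ?_, ?_⟩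
      · intro t ht
        by_cases h1 : t + 1 ≤ i
        · simpa [h1, (by omega : t ≤ i)] using harc t (by omega)
        · by_cases h2 : t ≤ i
          · have h3 : t = i := by omega
            subst h3
            have hj' : t + 1 + (j - t - 1) = j := by omega
            simp only [if_pos h2, if_neg h1, hj']
            exact hA
          · simp only [if_neg h2, if_neg h1]
            have h3 : t + 1 + (j - i - 1) = (t + (j - i - 1)) + 1 := by omega
            rw [h3]
            exact harc _ (by omega)
      · have h4 : ¬ (n₀ - (j - i - 1) ≤ i) := by omega
        have h5 : n₀ - (j - i - 1) + (j - i - 1) = n₀ := by omega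
        simp only [if_neg h4, h5]
        exact hgood
    have pinj : ∀ i j, i ≤ n₀ → j ≤ n₀ → p i = p j → i = j := by
      have key : ∀ i j, i < j → j ≤ n₀ → p i = p j → False := by
        intro i j hij hj heq
        rcases eq_or_lt_of_le hj with rfl | hjlt
        · exact hng i (by omega) (by rw [heq]; exact hgood)
        · refine hmin (n₀ - (j - i)) (by omega)
            ⟨fun t => if t ≤ i then p t else p (t + (j - i)), by simp [hp0], ?_, ?_⟩
          · intro t ht
            by_cases h1 : t + 1 ≤ i
            · simpa [h1, (by omega : t ≤ i)] using harc t (by omega)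
            · by_cases h2 : t ≤ i
              · have h3 : t = i := by omega
                subst h3
                have hj' : t + 1 + (j - t) = j + 1 := by omega
                simp only [if_pos h2, if_neg h1, hj']
                rw [heq]
                exact harc j hjlt
              · simp only [if_neg h2, if_neg h1]
                have h3 : t + 1 + (j - i) = (t + (j - i)) + 1 := by omega
                rw [h3]
                exact harc _ (by omega)
          · have h4 : ¬ (n₀ - (j - i) ≤ i) := by omega
            have h5 : n₀ - (j - i) + (j - i) = n₀ := by omega
            simp only [if_neg h4, h5]
            exact hgood
      intro i j hi hj heq
      rcases lt_trichotomy i j with h | h | h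
      · exact absurd heq fun he => key i j h hj he
      · exact h
      · exact absurd heq fun he => key j i h hi he.symm
    obtain ⟨jstar, hjstar⟩ := hgood
    have hpT : ∀ i, 1 ≤ i → i ≤ n₀ → p i ∈ T := by
      intro i h1 h2
      have h3 := (harc (i-1) (by omega)).1
      rwa [show i - 1 + 1 = i by omega] at h3
    set P : Finset ι := (Finset.range (n₀+1)).image p with hP
    have hmemP : ∀ y, y ∈ P ↔ ∃ i, i ≤ n₀ ∧ p i = y := by
      intro y; simp [hP, Nat.lt_succ_iff]
    have hpiP : ∀ i, i ≤ n₀ → p i ∈ P := fun i hi => (hmemP _).2 ⟨i, hi, rfl⟩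
    set c' : ι → Fin m := fun y => if h : ∃ i, i ≤ n₀ ∧ p i = y then
        (if h.choose = n₀ then jstar else c (p (h.choose + 1))) else c y with hc'def
    have hc'p : ∀ i, i ≤ n₀ → c' (p i) = if i = n₀ then jstar else c (p (i+1)) := by
      intro i hi
      have hex : ∃ i', i' ≤ n₀ ∧ p i' = p i := ⟨i, hi, rfl⟩
      have hch : hex.choose = i := pinj _ _ hex.choose_spec.1 hi hex.choose_spec.2
      simp only [hc'def]
      rw [dif_pos hex, hch]
    have hc'o : ∀ y, y ∉ P → c' y = c y := by
      intro y hy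
      have h1 : ¬ ∃ i, i ≤ n₀ ∧ p i = y := fun h => hy ((hmemP y).2 h)
      simp only [hc'def]
      rw [dif_neg h1]
    have hxP : x ∈ P := hp0 ▸ hpiP 0 (by omega)
    have hPins : ∀ i, i ≤ n₀ → p i ∈ insert x T := by
      intro i hi
      rcases Nat.eq_zero_or_pos i with rfl | h
      · rw [hp0]; exact Finset.mem_insert_self _ _
      · exact Finset.mem_insert_of_mem (hpT i h hi)
    have hnotGood' : ∀ i, i < n₀ → ∀ j', v (p i) ∈ RHSp K v (fib j') := by
      intro i hi
      have h1 := hng i hi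
      simpa [hGood] using h1
    refine ⟨c', fun j => ?_⟩
    set F := fib j with hF
    set Zj : Finset ι := ((Finset.range n₀).filter (fun i => c (p (i+1)) = j)).image p with hZ
    set Bj : Finset ι := (F \ P) ∪ Zj with hB
    have hZP : Zj ⊆ P := by
      intro y hy
      obtain ⟨i, hi, rfl⟩ := Finset.mem_image.1 hy
      exact hpiP i (le_of_lt (Finset.mem_range.1 (Finset.mem_filter.1 hi).1))
    have hmemZ : ∀ i, i ≤ n₀ → (p i ∈ Zj ↔ (i < n₀ ∧ c (p (i+1)) = j)) := by
      intro i hi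
      constructor
      · intro h
        obtain ⟨i', hi', heq⟩ := Finset.mem_image.1 h
        have h1 := Finset.mem_filter.1 hi'
        have h2 : i' < n₀ := Finset.mem_range.1 h1.1
        have h3 : i' = i := pinj _ _ (le_of_lt h2) hi heq
        exact ⟨h3 ▸ h2, h3 ▸ h1.2⟩
      · rintro ⟨h1, h2⟩
        exact Finset.mem_image_of_mem p (Finset.mem_filter.2 ⟨Finset.mem_range.2 h1, h2⟩)
    have hspan1 : RHSp K v Bj ≤ RHSp K v F := by
      rw [RHSp, span_le]
      rintro _ ⟨y, hy, rfl⟩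
      rcases Finset.mem_union.1 (by exact_mod_cast hy) with h | h
      · exact mem_RHSp v (Finset.mem_sdiff.1 h).1
      · obtain ⟨i, hi, rfl⟩ := Finset.mem_image.1 h
        exact hnotGood' i (Finset.mem_range.1 (Finset.mem_filter.1 hi).1) j
    have hkey : ∀ t, t ≤ n₀ → 1 ≤ t → c (p t) = j → v (p t) ∈ RHSp K v Bj := by
      intro t
      induction t using Nat.strong_induction_on with
      | _ t IH =>
      intro ht h1 hct
      have harct : Arc (p (t-1)) (p t) := by
        have h2 := harc (t-1) (by omega)
        rwa [show t - 1 + 1 = t by omega] at h2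
      have hmem : v (p (t-1)) ∈ RHSp K v F := hnotGood' (t-1) (by omega) j
      have hft : p t ∈ F := Finset.mem_filter.2 ⟨hpT t h1 ht, hct⟩
      obtain ⟨a, hw, hiff⟩ := RHrep v (hc j) hmem
      have harct' : v (p (t-1)) ∉ RHSp K v (F.erase (p t)) := by
        have h2 := harct.2
        rwa [hct] at h2
      have hat : a (p t) ≠ 0 := (hiff (p t) hft).2 harct'
      have hz_mem : ∀ z ∈ F.erase (p t), a z ≠ 0 → v z ∈ RHSp K v Bj := by
        intro z hz haz
        have hzF : z ∈ F := Finset.mem_of_mem_erase hz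
        have hzs := Finset.mem_filter.1 hzF
        have harcz : Arc (p (t-1)) z := by
          refine ⟨hzs.1, ?_⟩
          rw [hzs.2]
          exact (hiff z hzF).1 haz
        by_cases hzP : z ∈ P
        · obtain ⟨s, hs, rfl⟩ := (hmemP z).1 hzP
          have hst : s ≠ t := fun h => (Finset.mem_erase.1 hz).1 (by rw [h])
          have hslt : s < t := by
            by_contra hge
            push_neg at hge
            exact noshort (t-1) s (by omega) hs harcz
          have hs1 : 1 ≤ s := by
            rcases Nat.eq_zero_or_pos s with rfl | h
            · rw [hp0] at hzs
              exact absurd hzs.1 hx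
            · exact h
          exact IH s hslt (by omega) hs1 hzs.2
        · exact mem_RHSp v (Finset.mem_union_left _ (Finset.mem_sdiff.2 ⟨hzF, hzP⟩))
      have hpt1 : v (p (t-1)) ∈ RHSp K v Bj := by
        apply mem_RHSp
        apply Finset.mem_union_right
        apply Finset.mem_image_of_mem
        refine Finset.mem_filter.2 ⟨Finset.mem_range.2 (by omega), ?_⟩
        rw [show t - 1 + 1 = t by omega]
        exact hct
      have hsum : v (p (t-1)) = a (p t) • v (p t) + ∑ z ∈ F.erase (p t), a z • v z := by
        rw [hw]
        exact (Finset.add_sum_erase F (fun z => a z • v z) hft).symm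
      have hsummem : (∑ z ∈ F.erase (p t), a z • v z) ∈ RHSp K v Bj := by
        refine sum_mem fun z hz => ?_
        by_cases haz : a z = 0
        · simp [haz]
        · exact smul_mem _ _ (hz_mem z hz haz)
      have heq2 : a (p t) • v (p t) = v (p (t-1)) - ∑ z ∈ F.erase (p t), a z • v z := by
        rw [hsum]; abel
      have h2 : a (p t) • v (p t) ∈ RHSp K v Bj := by
        rw [heq2]; exact sub_mem hpt1 hsummem
      have h3 := (RHSp K v Bj).smul_mem (a (p t))⁻¹ h2
      rwa [inv_smul_smul₀ hat] at h3
    have hspan2 : RHSp K v F ≤ RHSp K v Bj := by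
      rw [RHSp, span_le]
      rintro _ ⟨y, hy, rfl⟩
      have hyF : y ∈ F := by exact_mod_cast hy
      by_cases hyP : y ∈ P
      · obtain ⟨t, ht, rfl⟩ := (hmemP y).1 hyP
        have h1 : 1 ≤ t := by
          rcases Nat.eq_zero_or_pos t with rfl | h
          · rw [hp0] at hyF
            exact absurd (Finset.mem_filter.1 hyF).1 hx
          · exact h
        exact hkey t ht h1 (Finset.mem_filter.1 hyF).2
      · exact mem_RHSp v (Finset.mem_union_left _ (Finset.mem_sdiff.2 ⟨hyF, hyP⟩))
    have hspanB : RHSp K v Bj = RHSp K v F := le_antisymm hspan1 hspan2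
    have hFP : F ∩ P = ((Finset.range n₀).filter
        (fun i => c (p (i+1)) = j)).image (fun i => p (i+1)) := by
      ext y
      constructor
      · intro hy
        have hyF := (Finset.mem_inter.1 hy).1
        obtain ⟨i, hi, rfl⟩ := (hmemP y).1 (Finset.mem_inter.1 hy).2
        have h1 : 1 ≤ i := by
          rcases Nat.eq_zero_or_pos i with rfl | h
          · rw [hp0] at hyF
            exact absurd (Finset.mem_filter.1 hyF).1 hx
          · exact h
        refine Finset.mem_image.2 ⟨i - 1, Finset.mem_filter.2
          ⟨Finset.mem_range.2 (by omega), ?_⟩, ?_⟩ <;>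
          rw [show i - 1 + 1 = i by omega]
        exact (Finset.mem_filter.1 hyF).2
      · intro hy
        obtain ⟨i, hi, rfl⟩ := Finset.mem_image.1 hy
        have h1 := Finset.mem_filter.1 hi
        have h2 : i < n₀ := Finset.mem_range.1 h1.1
        exact Finset.mem_inter.2 ⟨Finset.mem_filter.2
          ⟨hpT (i+1) (by omega) (by omega), h1.2⟩, hpiP (i+1) (by omega)⟩
    have hcardZ : Zj.card = ((Finset.range n₀).filter (fun i => c (p (i+1)) = j)).card := by
      apply Finset.card_image_of_injOn
      intro i hi i' hi' h
      have h1 : i < n₀ := Finset.mem_range.1 (Finset.mem_filter.1 hi).1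
      have h2 : i' < n₀ := Finset.mem_range.1 (Finset.mem_filter.1 hi').1
      exact pinj _ _ (by omega) (by omega) h
    have hcardFP : (F ∩ P).card =
        ((Finset.range n₀).filter (fun i => c (p (i+1)) = j)).card := by
      rw [hFP]
      apply Finset.card_image_of_injOn
      intro i hi i' hi' h
      have h1 : i < n₀ := Finset.mem_range.1 (Finset.mem_filter.1 hi).1
      have h2 : i' < n₀ := Finset.mem_range.1 (Finset.mem_filter.1 hi').1
      have := pinj (i+1) (i'+1) (by omega) (by omega) h
      omega
    have hdisj : Disjoint (F \ P) Zj := by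
      rw [Finset.disjoint_left]
      intro y hy hyZ
      exact (Finset.mem_sdiff.1 hy).2 (hZP hyZ)
    have hBcard : Bj.card = F.card := by
      rw [hB, Finset.card_union_of_disjoint hdisj, hcardZ, ← hcardFP]
      exact Finset.card_sdiff_add_card_inter F P
    have hBInd : RHInd K v Bj := by
      rw [RHInd, hspanB, hBcard]
      exact hc j
    have hpn0B : p n₀ ∉ Bj := by
      intro h
      rcases Finset.mem_union.1 h with h | h
      · exact (Finset.mem_sdiff.1 h).2 (hpiP n₀ le_rfl)
      · have := (hmemZ n₀ le_rfl).1 h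
        omega
    have hGj : (insert x T).filter (fun i => c' i = j) =
        if j = jstar then insert (p n₀) Bj else Bj := by
      ext y
      by_cases hyP : y ∈ P
      · obtain ⟨i, hi, rfl⟩ := (hmemP y).1 hyP
        have hins : p i ∈ insert x T := hPins i hi
        have hcp := hc'p i hi
        by_cases hin : i = n₀
        · subst hin
          rw [if_pos rfl] at hcp
          simp only [Finset.mem_filter, hins, true_and, hcp]
          constructor
          · intro h
            rw [← h, if_pos rfl]
            exact Finset.mem_insert_self _ _
          · intro h
            by_cases hj : j = jstar
            · exact hj.symm
            · rw [if_neg hj] at h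
              exact absurd h hpn0B
        · rw [if_neg hin] at hcp
          have hilt : i < n₀ := by omega
          simp only [Finset.mem_filter, hins, true_and, hcp]
          have hpne : p i ≠ p n₀ := fun h => hin (pinj _ _ hi le_rfl h)
          have hmz := hmemZ i hi
          constructor
          · intro h
            have hB2 : p i ∈ Bj := Finset.mem_union_right _ (hmz.2 ⟨hilt, h⟩)
            by_cases hj : j = jstar
            · rw [if_pos hj]
              exact Finset.mem_insert_of_mem hB2
            · rw [if_neg hj]
              exact hB2
          · intro h
            have hB2 : p i ∈ Bj := by
              by_cases hj : j = jstar
              · rw [if_pos hj] at h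
                rcases Finset.mem_insert.1 h with h | h
                · exact absurd h hpne
                · exact h
              · rwa [if_neg hj] at h
            rcases Finset.mem_union.1 hB2 with h2 | h2
            · exact absurd hyP ((Finset.mem_sdiff.1 h2).2)
            · exact (hmz.1 h2).2
      · have hcy := hc'o y hyP
        have hyne : y ≠ x := fun h => hyP (h ▸ hxP)
        have hynZ : y ∉ Zj := fun h => hyP (hZP h)
        have hynpn : y ≠ p n₀ := fun h => hyP (h ▸ hpiP n₀ le_rfl)
        simp only [Finset.mem_filter, Finset.mem_insert, hcy]
        constructor
        · rintro ⟨h1 | h1, h2⟩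
          · exact absurd h1 hyne
          · have hB2 : y ∈ Bj := Finset.mem_union_left _
              (Finset.mem_sdiff.2 ⟨Finset.mem_filter.2 ⟨h1, h2⟩, hyP⟩)
            by_cases hj : j = jstar
            · rw [if_pos hj]; exact Finset.mem_insert_of_mem hB2
            · rwa [if_neg hj]
        · intro h
          have hB2 : y ∈ Bj := by
            by_cases hj : j = jstar
            · rw [if_pos hj] at h
              rcases Finset.mem_insert.1 h with h | h
              · exact absurd h hynpn
              · exact h
            · rwa [if_neg hj] at h
          rcases Finset.mem_union.1 hB2 with h2 | h2
          · have h3 := Finset.mem_filter.1 (Finset.mem_sdiff.1 h2).1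
            exact ⟨Or.inr h3.1, h3.2⟩
          · exact absurd h2 hynZ
    rw [hGj]
    by_cases hj : j = jstar
    · rw [if_pos hj]
      refine RHInd_insert v hBInd hpn0B ?_
      rw [hspanB, hF, hj]
      exact hjstar
    · rw [if_neg hj]
      exact hBInd
  · -- no augmenting path: derive a contradiction with `hcond`
    exfalso
    set Reach : ι → Prop := Relation.ReflTransGen Arc x with hReach
    have reach_path : ∀ y, Reach y →
        ∃ n, ∃ p : ℕ → ι, p 0 = x ∧ (∀ i < n, Arc (p i) (p (i+1))) ∧ p n = y := by
      intro y h
      induction h with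
      | refl => exact ⟨0, fun _ => x, rfl, fun i hi => absurd hi (by omega), rfl⟩
      | @tail b z hab harc ih =>
        obtain ⟨n, p, h0, hA, hE⟩ := ih
        refine ⟨n + 1, fun i => if i ≤ n then p i else z, by simp [h0], ?_, by simp⟩
        intro i hi
        rcases lt_or_eq_of_le (Nat.lt_succ_iff.1 hi) with h | h
        · simpa [Nat.le_of_lt h, Nat.succ_le_of_lt h] using hA i h
        · subst h
          simpa [hE] using harc
    have hnotgood : ∀ y, Reach y → ¬ Good y := by
      intro y hy hg
      obtain ⟨n, p, h0, hA, hE⟩ := reach_path y hy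
      exact hQ ⟨n, p, h0, hA, hE ▸ hg⟩
    set S : Finset ι := (insert x T).filter Reach with hS
    have hxS : x ∈ S :=
      Finset.mem_filter.2 ⟨Finset.mem_insert_self x T, Relation.ReflTransGen.refl⟩
    have hstep : ∀ y, Reach y → ∀ j, v y ∈ RHSp K v (fib j ∩ S) := by
      intro y hy j
      have hyg : ∀ j', v y ∈ RHSp K v (fib j') := by
        have := hnotgood y hy
        simpa [hGood] using this
      obtain ⟨a, hw, hiff⟩ := RHrep v (hc j) (hyg j)
      have husub : ((fib j).filter (fun z => a z ≠ 0)) ⊆ fib j ∩ S := by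
        intro z hz
        rw [Finset.mem_filter] at hz
        obtain ⟨hzf, hza⟩ := hz
        have hzT : z ∈ T := (Finset.mem_filter.1 hzf).1
        have hcz : c z = j := (Finset.mem_filter.1 hzf).2
        have harczy : Arc y z := by
          refine ⟨hzT, ?_⟩
          rw [hcz]
          exact (hiff z hzf).1 hza
        have hzS : z ∈ S := by
          simp only [hS, Finset.mem_filter, Finset.mem_insert]
          exact ⟨Or.inr hzT, hy.tail harczy⟩
        exact Finset.mem_inter.2 ⟨hzf, hzS⟩
      have hwu : v y ∈ RHSp K v ((fib j).filter (fun z => a z ≠ 0)) := by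
        have hw2 : v y = ∑ z ∈ (fib j).filter (fun z => a z ≠ 0), a z • v z := by
          rw [hw]
          refine (Finset.sum_filter_of_ne ?_).symm
          intro z _ hne
          intro h; exact hne (by simp [h])
        rw [hw2]
        exact sum_mem fun z hz => smul_mem _ _ (mem_RHSp v hz)
      exact RHSp_mono v husub hwu
    have hspan : ∀ j, RHSp K v (fib j ∩ S) = RHSp K v S := by
      intro j
      refine le_antisymm (RHSp_mono v Finset.inter_subset_right) ?_
      rw [RHSp, span_le]
      rintro _ ⟨y, hy, rfl⟩
      have hyS : y ∈ S := hy
      have hyR : Reach y := (Finset.mem_filter.1 hyS).2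
      exact hstep y hyR j
    have hcardj : ∀ j, (fib j ∩ S).card = Module.finrank K (RHSp K v S) := by
      intro j
      have h1 : RHInd K v (fib j ∩ S) := RHInd_mono v Finset.inter_subset_left (hc j)
      rw [RHInd, hspan j] at h1
      exact h1
    have hpart : ∀ j, (S.erase x).filter (fun y => c y = j) = fib j ∩ S := by
      intro j
      ext y
      simp only [Finset.mem_filter, Finset.mem_erase, Finset.mem_inter, hfib]
      constructor
      · rintro ⟨⟨hne, hyS⟩, hcy⟩
        have hyT : y ∈ T := by
          have := (Finset.mem_filter.1 hyS).1
          rcases Finset.mem_insert.1 this with h | h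
          · exact absurd h hne
          · exact h
        exact ⟨⟨hyT, hcy⟩, hyS⟩
      · rintro ⟨⟨hyT, hcy⟩, hyS⟩
        exact ⟨⟨fun h => hx (h ▸ hyT), hyS⟩, hcy⟩
    have hsum : (S.erase x).card = ∑ j : Fin m, (fib j ∩ S).card := by
      rw [Finset.card_eq_sum_card_fiberwise (f := c) (t := Finset.univ)
        (fun y _ => Finset.mem_univ (c y))]
      exact Finset.sum_congr rfl fun j _ => by rw [hpart j]
    have hScard : S.card = m * Module.finrank K (RHSp K v S) + 1 := by
      have h1 : (S.erase x).card + 1 = S.card := Finset.card_erase_add_one hxS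
      rw [← h1, hsum]
      simp only [hcardj]
      rw [Finset.sum_const, Finset.card_univ, Fintype.card_fin, smul_eq_mul]
    have := hcond S (Finset.filter_subset _ _)
    omega

end Aug

section Main

variable {K : Type*} [Field K] {V : Type*} [AddCommGroup V] [Module K V] [FiniteDimensional K V]
variable {ι : Type*} [Fintype ι] [DecidableEq ι]

lemma radoHorn (v : ι → V) (m : ℕ) (hm : 0 < m)
    (hcond : ∀ S : Finset ι, S.card ≤ m * Module.finrank K (RHSp K v S)) :
    ∃ c : ι → Fin m, ∀ j, RHInd K v (Finset.univ.filter (fun i => c i = j)) := by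
  classical
  suffices h : ∀ T : Finset ι, ∃ c : ι → Fin m,
      ∀ j, RHInd K v (T.filter (fun i => c i = j)) from h Finset.univ
  intro T
  induction T using Finset.induction_on with
  | empty =>
    exact ⟨fun _ => ⟨0, hm⟩, fun j => by
      rw [Finset.filter_empty]; exact RHInd_empty v⟩
  | @insert a s ha ih =>
    obtain ⟨c, hc⟩ := ih
    exact RHaug v s a ha c hc fun S _ => hcond S

end Main

open scoped InnerProductSpace

lemma onb_parseval {E : Type*} [NormedAddCommGroup E] [InnerProductSpace ℂ E]
    {n : ℕ} (b : OrthonormalBasis (Fin n) ℂ E) (x : E) :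
    ∑ t, ‖⟪b t, x⟫_ℂ‖ ^ 2 = ‖x‖ ^ 2 := by
  have h1 : ‖b.repr x‖ = ‖x‖ := b.repr.norm_map x
  rw [EuclideanSpace.norm_eq] at h1
  have h2 : ∀ t, ‖(b.repr x) t‖ = ‖⟪b t, x⟫_ℂ‖ := fun t => by
    rw [b.repr_apply_apply]
  calc ∑ t, ‖⟪b t, x⟫_ℂ‖ ^ 2 = ∑ t, ‖(b.repr x) t‖ ^ 2 := by
        exact Finset.sum_congr rfl fun t _ => by rw [h2]
    _ = ‖x‖ ^ 2 := by
        rw [← h1, Real.sq_sqrt (Finset.sum_nonneg fun t _ => sq_nonneg _)]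


/-- An equal-norm Parseval frame of `rN + k` vectors (`0 < k < N`) for an
`N`-dimensional Hilbert space can be partitioned into `r + 1` linearly independent sets. -/
theorem equalNorm_parseval_partition_independent
    {H : Type*} [NormedAddCommGroup H] [InnerProductSpace ℂ H] [FiniteDimensional ℂ H]
    (r k N : ℕ) (hk : 0 < k) (hkN : k < N) (hdim : Module.finrank ℂ H = N)
    (f : Fin (r * N + k) → H)
    (hParseval : ∀ x : H, ∑ i, ‖⟪x, f i⟫_ℂ‖ ^ 2 = ‖x‖ ^ 2)
    (hequal : ∀ i j, ‖f i‖ = ‖f j‖) :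
    ∃ A : Fin (r + 1) → Set (Fin (r * N + k)),
      (⋃ j, A j) = Set.univ ∧ Pairwise (Function.onFun Disjoint A) ∧
      ∀ j, LinearIndependent ℂ ((A j).restrict f) := by
  classical
  have hMpos : 0 < r * N + k := by positivity
  have hNpos : 0 < N := by omega
  set b := stdOrthonormalBasis ℂ H with hb
  have htotal : ∑ i, ‖f i‖ ^ 2 = (N : ℝ) := by
    calc ∑ i, ‖f i‖ ^ 2 = ∑ i, ∑ t, ‖⟪b t, f i⟫_ℂ‖ ^ 2 :=
          Finset.sum_congr rfl fun i _ => (onb_parseval b (f i)).symm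
      _ = ∑ t, ∑ i, ‖⟪b t, f i⟫_ℂ‖ ^ 2 := Finset.sum_comm
      _ = ∑ t : Fin (Module.finrank ℂ H), ‖b t‖ ^ 2 :=
          Finset.sum_congr rfl fun t _ => hParseval (b t)
      _ = (N : ℝ) := by
          simp only [b.orthonormal.1]
          simp [hdim]
  set i₀ : Fin (r * N + k) := ⟨0, hMpos⟩ with hi₀
  have hceq : ∀ i, ‖f i‖ ^ 2 = ‖f i₀‖ ^ 2 := fun i => by rw [hequal i i₀]
  have hMc : ((r * N + k : ℕ) : ℝ) * ‖f i₀‖ ^ 2 = (N : ℝ) := by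
    rw [← htotal]
    rw [Finset.sum_congr rfl fun i _ => hceq i]
    simp [Finset.sum_const, mul_comm]
  have hsub : ∀ S : Finset (Fin (r * N + k)),
      ∑ i ∈ S, ‖f i‖ ^ 2 ≤ (Module.finrank ℂ (RHSp ℂ f S) : ℝ) := by
    intro S
    set W := RHSp ℂ f S with hW
    set b' := stdOrthonormalBasis ℂ W with hb'
    have hmem : ∀ i ∈ S, f i ∈ W := fun i hi => mem_RHSp f hi
    calc ∑ i ∈ S, ‖f i‖ ^ 2
        = ∑ i ∈ S.attach, ∑ t, ‖⟪((b' t : W) : H), f (i : Fin _)⟫_ℂ‖ ^ 2 := by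
          rw [← Finset.sum_attach S (fun i => ‖f i‖ ^ 2)]
          refine Finset.sum_congr rfl fun i _ => ?_
          have h1 := onb_parseval b' (⟨f i, hmem i i.2⟩ : W)
          have h2 : ‖(⟨f i, hmem i i.2⟩ : W)‖ = ‖f i‖ := rfl
          rw [h2] at h1
          rw [← h1]
          refine Finset.sum_congr rfl fun t _ => ?_
          congr 1
      _ = ∑ t, ∑ i ∈ S.attach, ‖⟪((b' t : W) : H), f (i : Fin _)⟫_ℂ‖ ^ 2 := Finset.sum_comm
      _ = ∑ t, ∑ i ∈ S, ‖⟪((b' t : W) : H), f i⟫_ℂ‖ ^ 2 := by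
          refine Finset.sum_congr rfl fun t _ => ?_
          rw [← Finset.sum_attach S (fun i => ‖⟪((b' t : W) : H), f i⟫_ℂ‖ ^ 2)]
      _ ≤ ∑ t, ∑ i, ‖⟪((b' t : W) : H), f i⟫_ℂ‖ ^ 2 := by
          refine Finset.sum_le_sum fun t _ => ?_
          exact Finset.sum_le_sum_of_subset_of_nonneg (Finset.subset_univ S)
            (fun i _ _ => sq_nonneg _)
      _ = ∑ t : Fin (Module.finrank ℂ W), ‖((b' t : W) : H)‖ ^ 2 :=
          Finset.sum_congr rfl fun t _ => hParseval _
      _ = (Module.finrank ℂ W : ℝ) := by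
          have h3 : ∀ t : Fin (Module.finrank ℂ W), ‖((b' t : W) : H)‖ = 1 := fun t => by
            rw [show ‖((b' t : W) : H)‖ = ‖b' t‖ from rfl]
            exact b'.orthonormal.1 t
          simp [h3]
  have hcond : ∀ S : Finset (Fin (r * N + k)),
      S.card ≤ (r + 1) * Module.finrank ℂ (RHSp ℂ f S) := by
    intro S
    set d := Module.finrank ℂ (RHSp ℂ f S) with hd
    have h2 : ∑ i ∈ S, ‖f i‖ ^ 2 = (S.card : ℝ) * ‖f i₀‖ ^ 2 := by
      rw [Finset.sum_congr rfl fun i _ => hceq i]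
      simp [Finset.sum_const, mul_comm]
    have h3 : (S.card : ℝ) * ‖f i₀‖ ^ 2 ≤ (d : ℝ) := h2 ▸ hsub S
    have h4 : (S.card : ℝ) * (N : ℝ) ≤ ((r * N + k : ℕ) : ℝ) * (d : ℝ) := by
      calc (S.card : ℝ) * (N : ℝ)
          = ((r * N + k : ℕ) : ℝ) * ((S.card : ℝ) * ‖f i₀‖ ^ 2) := by
            rw [← hMc]; ring
        _ ≤ ((r * N + k : ℕ) : ℝ) * (d : ℝ) :=
            mul_le_mul_of_nonneg_left h3 (by positivity)
    have h5 : S.card * N ≤ (r * N + k) * d := by exact_mod_cast h4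
    have h7 : r * N + k ≤ (r + 1) * N := by nlinarith
    have h6 : (r * N + k) * d ≤ ((r + 1) * d) * N := by
      calc (r * N + k) * d ≤ ((r + 1) * N) * d := Nat.mul_le_mul_right d h7
        _ = ((r + 1) * d) * N := by ring
    exact Nat.le_of_mul_le_mul_right (le_trans h5 h6) hNpos
  obtain ⟨c, hc⟩ := radoHorn f (r + 1) (by omega) hcond
  refine ⟨fun j => {i | c i = j}, ?_, ?_, ?_⟩
  · refine Set.eq_univ_iff_forall.2 fun i => Set.mem_iUnion.2 ⟨c i, rfl⟩
  · intro j j' hjj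
    rw [Function.onFun, Set.disjoint_left]
    intro i hi hi'
    exact hjj (hi ▸ hi' ▸ rfl)
  · intro j
    have h := (RHInd_iff f (Finset.univ.filter (fun i => c i = j))).1 (hc j)
    have hset : ((Finset.univ.filter (fun i => c i = j) : Finset (Fin (r * N + k))) :
        Set (Fin (r * N + k))) = {i | c i = j} := by ext i; simp
    rw [hset] at h
    exact h
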